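/- Fix ρ ∈ ℝ and σ > 0. The expected improvement EI(μ) = (ρ − μ)·Φ((ρ − μ)/σ) + σ·φ((ρ − μ)/σ), viewed as a function of the predictive mean μ, is strictly monotonically decreasing on ℝ. -/

import Mathlib

open MeasureTheory

/-- The standard normal probability density function. -/
noncomputable def stdNormalPDF (z : ℝ) : ℝ := Real.exp (-z ^ 2 / 2) / Real.sqrt (2 * Real.pi)

/-- The standard normal cumulative distribution function. -/
noncomputable def stdNormalCDF (z : ℝ) : ℝ := ∫ t in Set.Iic z, stdNormalPDF t

lemma stdNormalPDF_pos (z : ℝ) : 0 < stdNormalPDF z := by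
  unfold stdNormalPDF
  positivity

lemma stdNormalPDF_continuous : Continuous stdNormalPDF := by
  unfold stdNormalPDF
  fun_prop

lemma stdNormalPDF_integrable : Integrable stdNormalPDF := by
  have h : Integrable (fun z : ℝ => Real.exp (-(1/2) * z ^ 2)) :=
    integrable_exp_neg_mul_sq (by norm_num)
  have : stdNormalPDF = fun z =>
      (Real.sqrt (2 * Real.pi))⁻¹ * Real.exp (-(1/2) * z ^ 2) := by
    funext z; unfold stdNormalPDF; ring_nf
  rw [this]
  exact h.const_mul _

lemma stdNormalCDF_pos (x : ℝ) : 0 < stdNormalCDF x := by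
  unfold stdNormalCDF
  apply setIntegral_pos_iff_support_of_nonneg_ae ?_ ?_ |>.mpr
  · have : (Function.support stdNormalPDF) = Set.univ := by
      ext z; simp [Function.mem_support, (stdNormalPDF_pos z).ne']
    rw [this]
    simp [Measure.restrict_apply]
  · filter_upwards with z using (stdNormalPDF_pos z).le
  · exact stdNormalPDF_integrable.integrableOn

lemma stdNormalCDF_hasDerivAt (x : ℝ) :
    HasDerivAt stdNormalCDF (stdNormalPDF x) x := by
  have key : ∀ y : ℝ, stdNormalCDF y = stdNormalCDF 0 + ∫ t in (0:ℝ)..y, stdNormalPDF t := by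
    intro y
    unfold stdNormalCDF
    rw [← intervalIntegral.integral_Iic_sub_Iic stdNormalPDF_integrable.integrableOn
      stdNormalPDF_integrable.integrableOn]
    ring
  have h : HasDerivAt (fun y => stdNormalCDF 0 + ∫ t in (0:ℝ)..y, stdNormalPDF t)
      (stdNormalPDF x) x := by
    have := intervalIntegral.integral_hasDerivAt_right
      (stdNormalPDF_integrable.intervalIntegrable)
      stdNormalPDF_continuous.stronglyMeasurable.stronglyMeasurableAtFilter
      stdNormalPDF_continuous.continuousAt (a := 0) (b := x)
    exact this.const_add (stdNormalCDF 0)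
  exact h.congr_of_eventuallyEq (Filter.Eventually.of_forall fun y => key y)

lemma stdNormalPDF_hasDerivAt (z : ℝ) :
    HasDerivAt stdNormalPDF (-z * stdNormalPDF z) z := by
  have h1 : HasDerivAt (fun z : ℝ => -z ^ 2 / 2) (-z) z := by
    have : HasDerivAt (fun z : ℝ => -z ^ 2 / 2) (-(2 * z ^ 1) / 2) z := by
      exact (((hasDerivAt_pow 2 z).neg).div_const 2)
    convert this using 1
    ring
  have h2 : HasDerivAt (fun z : ℝ => Real.exp (-z ^ 2 / 2)) (Real.exp (-z ^ 2 / 2) * (-z)) z :=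
    (Real.hasDerivAt_exp _).comp z h1
  have h3 := h2.div_const (Real.sqrt (2 * Real.pi))
  have e : -z * stdNormalPDF z = Real.exp (-z ^ 2 / 2) * (-z) / Real.sqrt (2 * Real.pi) := by
    unfold stdNormalPDF; ring
  rw [e]; exact h3

/-- The expected improvement `EI(μ) = (ρ - μ)·Φ((ρ - μ)/σ) + σ·φ((ρ - μ)/σ)`, as a function
of the predictive mean μ, is strictly monotonically decreasing on ℝ. -/
theorem expected_improvement_strictAnti_mu (ρ σ : ℝ) (hσ : 0 < σ) :
    StrictAnti
      (fun μ : ℝ => (ρ - μ) * stdNormalCDF ((ρ - μ) / σ) + σ * stdNormalPDF ((ρ - μ) / σ)) := by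
  apply strictAnti_of_hasDerivAt_neg
    (f' := fun μ => -stdNormalCDF ((ρ - μ) / σ))
  · intro μ
    have hu : HasDerivAt (fun μ : ℝ => (ρ - μ) / σ) (-1 / σ) μ := by
      have : HasDerivAt (fun μ : ℝ => ρ - μ) (-1) μ := by
        exact (hasDerivAt_id μ).const_sub ρ
      exact this.div_const σ
    set u := (ρ - μ) / σ with hu_def
    have hΦ : HasDerivAt (fun μ : ℝ => stdNormalCDF ((ρ - μ) / σ))
        (stdNormalPDF u * (-1 / σ)) μ := by
        have := (stdNormalCDF_hasDerivAt u).comp μ hu; exact this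
    have hφ : HasDerivAt (fun μ : ℝ => stdNormalPDF ((ρ - μ) / σ))
        (-u * stdNormalPDF u * (-1 / σ)) μ := by
        have := (stdNormalPDF_hasDerivAt u).comp μ hu; exact this
    have hlin : HasDerivAt (fun μ : ℝ => ρ - μ) (-1) μ := by
      exact (hasDerivAt_id μ).const_sub ρ
    have h := (hlin.mul hΦ).add (hφ.const_mul σ)
    have e : -stdNormalCDF u = -1 * stdNormalCDF ((ρ - μ) / σ) + (ρ - μ) * (stdNormalPDF u * (-1 / σ))
        + σ * (-u * stdNormalPDF u * (-1 / σ)) := by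
      have hσ' : σ ≠ 0 := hσ.ne'
      rw [hu_def]
      field_simp
      ring
    rw [e]; exact h
  · intro μ
    simp only [neg_neg, Left.neg_neg_iff]
    exact stdNormalCDF_pos _
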